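/- Threshold comparison: the inequality s*(α) − 1/2 < (1−α)/3, where s*(α) is defined piecewise by s*(α) = (1/4)(√(68α²−52α+9) − 10α + 7) for 1 < α ≤ (35+√105)/32 and s*(α) = (1/2)(√(4α²−2α+1) − 2α + 1) for α > (35+√105)/32, holds if and only if 1 < α < (17 + 3√21)/20. -/
import Mathlib


/-- The regularity threshold `s*(α)` of the main theorem. -/
noncomputable def sStar (α : ℝ) : ℝ :=
  if α ≤ (35 + Real.sqrt 105) / 32 then
    (1/4) * (Real.sqrt (68*α^2 - 52*α + 9) - 10*α + 7)
  else
    (1/2) * (Real.sqrt (4*α^2 - 2*α + 1) - 2*α + 1)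

/-- Threshold comparison: for `α > 1`, `s*(α) − 1/2 < (1−α)/3` holds if and only if
`α < (17 + 3√21)/20`. -/
theorem threshold_comparison (α : ℝ) (hα : 1 < α) :
    sStar α - 1/2 < (1 - α)/3 ↔ α < (17 + 3 * Real.sqrt 21) / 20 := by
  have h21 : Real.sqrt 21 ^ 2 = 21 := Real.sq_sqrt (by norm_num)
  have h21n : (0:ℝ) ≤ Real.sqrt 21 := Real.sqrt_nonneg _
  have lb21 : (4.58:ℝ) < Real.sqrt 21 := by
    have := Real.lt_sqrt (x := (4.58:ℝ)) (y := 21) (by norm_num)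
    rw [this]; norm_num
  have ub105 : Real.sqrt 105 < 10.25 := by
    have := Real.sqrt_lt' (x := (105:ℝ)) (y := (10.25:ℝ)) (by norm_num)
    rw [this]; norm_num
  unfold sStar
  split_ifs with hc
  · -- case α ≤ (35+√105)/32 : LHS always holds, and also α < (17+3√21)/20
    have hαr : α < (17 + 3 * Real.sqrt 21) / 20 := by nlinarith
    have hQnn : (0:ℝ) ≤ 68*α^2 - 52*α + 9 := by nlinarith
    have hr : (0:ℝ) < (26*α - 11)/3 := by linarith
    have hs : Real.sqrt (68*α^2 - 52*α + 9) < (26*α - 11)/3 := by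
      rw [Real.sqrt_lt' hr]; nlinarith
    constructor
    · intro _; exact hαr
    · intro _; linarith
  · -- case α > (35+√105)/32
    push_neg at hc
    have hPnn : (0:ℝ) ≤ 4*α^2 - 2*α + 1 := by nlinarith
    have hP : Real.sqrt (4*α^2 - 2*α + 1) ^ 2 = 4*α^2 - 2*α + 1 := Real.sq_sqrt hPnn
    have hPn : (0:ℝ) ≤ Real.sqrt (4*α^2 - 2*α + 1) := Real.sqrt_nonneg _
    constructor
    · intro h
      have h3 : 3 * Real.sqrt (4*α^2 - 2*α + 1) < 4*α + 2 := by linarith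
      have hq : 20*α^2 - 34*α + 5 < 0 := by nlinarith
      nlinarith
    · intro h
      have hq : 20*α^2 - 34*α + 5 < 0 := by nlinarith
      have hs : Real.sqrt (4*α^2 - 2*α + 1) < (4*α + 2)/3 := by
        rw [Real.sqrt_lt' (by linarith)]; nlinarith
      linarith
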